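/- Let σ be a weakly consecutive permutation of [k], and m ∈ [k]. Then σ⁻¹(m) satisfies (k mod m) + 1 ≤ σ⁻¹(m) ≤ k - (k mod m). -/

import Mathlib

/-- A permutation `σ` of `[k] = {1,…,k}` is weakly consecutive if for all
`i, j ∈ [k]` and integers `m`, whenever `m ∣ σ i` and `m ∣ (i - j)`, then `m ∣ σ j`. -/
def IsWCS (k : ℕ) (σ : ℕ → ℕ) : Prop :=
  Set.BijOn σ (Set.Icc 1 k) (Set.Icc 1 k) ∧
  ∀ (m : ℕ) (i j : ℕ), i ∈ Set.Icc 1 k → j ∈ Set.Icc 1 k →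
    m ∣ σ i → (m : ℤ) ∣ ((i : ℤ) - (j : ℤ)) → m ∣ σ j

lemma wcs_pigeon (k : ℕ) (σ : ℕ → ℕ)
    (hbij : Set.BijOn σ (Set.Icc 1 k) (Set.Icc 1 k)) (m : ℕ) (hm1 : 1 ≤ m)
    (g : ℕ → ℕ)
    (hg : ∀ t ∈ Finset.range (k / m + 1), g t ∈ Set.Icc 1 k)
    (hginj : ∀ t1 ∈ Finset.range (k / m + 1), ∀ t2 ∈ Finset.range (k / m + 1),
      g t1 = g t2 → t1 = t2)
    (hdvd : ∀ t ∈ Finset.range (k / m + 1), m ∣ σ (g t)) : False := by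
  have key : (Finset.range (k / m + 1)).card ≤ (Finset.Icc 1 (k / m)).card := by
    apply Finset.card_le_card_of_injOn (fun t => σ (g t) / m)
    · intro t ht
      obtain ⟨c, hc⟩ := hdvd t ht
      have hmem : σ (g t) ∈ Set.Icc 1 k := hbij.mapsTo (hg t ht)
      simp only [Set.mem_Icc] at hmem
      simp only [Finset.mem_coe, Finset.mem_Icc]
      rw [hc, Nat.mul_div_cancel_left _ hm1]
      have hcomm : c * m = m * c := Nat.mul_comm _ _
      constructor
      · have : c ≠ 0 := by rintro rfl; omega
        omega
      · rw [Nat.le_div_iff_mul_le hm1]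
        omega
    · intro t1 ht1 t2 ht2 h
      simp only at h
      have e1 : σ (g t1) = m * (σ (g t1) / m) := (Nat.mul_div_cancel' (hdvd t1 ht1)).symm
      have e2 : σ (g t2) = m * (σ (g t2) / m) := (Nat.mul_div_cancel' (hdvd t2 ht2)).symm
      have : σ (g t1) = σ (g t2) := by rw [e1, e2, h]
      have := hbij.injOn (hg t1 ht1) (hg t2 ht2) this
      exact hginj t1 ht1 t2 ht2 this
  simp [Nat.card_Icc] at key

theorem preimage_position (k : ℕ) (σ : ℕ → ℕ) (hσ : IsWCS k σ) (m im : ℕ)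
    (hm : m ∈ Set.Icc 1 k) (him : im ∈ Set.Icc 1 k) (hσim : σ im = m) :
    k % m + 1 ≤ im ∧ im ≤ k - k % m := by
  simp only [Set.mem_Icc] at hm him
  obtain ⟨hm1, hmk⟩ := hm
  obtain ⟨him1, himk⟩ := him
  have hdm : m * (k / m) + k % m = k := Nat.div_add_mod k m
  have hrm : k % m < m := Nat.mod_lt _ hm1
  have hdvd_im : m ∣ σ im := by rw [hσim]
  constructor
  · by_contra h
    push_neg at h
    have him_le : im ≤ k % m := by omega
    apply wcs_pigeon k σ hσ.1 m hm1 (fun t => im + t * m)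
    · intro t ht
      simp only [Finset.mem_range] at ht
      have h2 : t * m ≤ k / m * m := Nat.mul_le_mul_right m (by omega)
      have h3 : k / m * m = m * (k / m) := Nat.mul_comm _ _
      simp only [Set.mem_Icc]
      omega
    · intro t1 ht1 t2 ht2 hgt
      have : t1 * m = t2 * m := by omega
      exact Nat.eq_of_mul_eq_mul_right hm1 this
    · intro t ht
      simp only [Finset.mem_range] at ht
      have h2 : t * m ≤ k / m * m := Nat.mul_le_mul_right m (by omega)
      have h3 : k / m * m = m * (k / m) := Nat.mul_comm _ _
      have hmem : im + t * m ∈ Set.Icc 1 k := by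
        simp only [Set.mem_Icc]
        omega
      apply hσ.2 m im (im + t * m) (by simp only [Set.mem_Icc]; omega) hmem hdvd_im
      refine ⟨-t, ?_⟩
      push_cast
      ring
  · by_contra h
    push_neg at h
    have him_ge : k - k % m < im := h
    have h3 : k / m * m = m * (k / m) := Nat.mul_comm _ _
    apply wcs_pigeon k σ hσ.1 m hm1 (fun t => im - t * m)
    · intro t ht
      simp only [Finset.mem_range] at ht
      have h2 : t * m ≤ k / m * m := Nat.mul_le_mul_right m (by omega)
      simp only [Set.mem_Icc]
      omega
    · intro t1 ht1 t2 ht2 hgt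
      simp only [Finset.mem_range] at ht1 ht2
      have h1 : t1 * m ≤ k / m * m := Nat.mul_le_mul_right m (by omega)
      have h2 : t2 * m ≤ k / m * m := Nat.mul_le_mul_right m (by omega)
      have : t1 * m = t2 * m := by omega
      exact Nat.eq_of_mul_eq_mul_right hm1 this
    · intro t ht
      simp only [Finset.mem_range] at ht
      have h2 : t * m ≤ k / m * m := Nat.mul_le_mul_right m (by omega)
      have hmem : im - t * m ∈ Set.Icc 1 k := by
        simp only [Set.mem_Icc]; omega
      apply hσ.2 m im (im - t * m) (by simp only [Set.mem_Icc]; omega) hmem hdvd_im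
      refine ⟨t, ?_⟩
      have hle : t * m ≤ im := by omega
      push_cast [Nat.cast_sub hle]
      ring
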